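/- arXiv:2104.00286 — 3 statements merged into one kernel-verified Lean document; each statement's English description precedes it below -/
import Mathlib

section
/- For the function h(x) = tanh(x)/x (with h(0)=1), the inequality -h'(x) ≤ h(x)^2 holds for all x ≥ 0; equivalently, x*tanh'(x) - tanh(x) ≥ -tanh(x)^2 suitably rearranged gives -(d/dx)(tanh x / x) ≤ (tanh x / x)^2 for x > 0. -/
/-- For h(x) = tanh(x)/x, we have -h'(x) ≤ h(x)² for all x > 0. -/
theorem neg_deriv_tanh_div_le_sq :
    ∀ x : ℝ, 0 < x →
      -(deriv (fun y : ℝ => Real.tanh y / y) x) ≤ (Real.tanh x / x) ^ 2 := by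
  intro x hx
  have hc : 0 < Real.cosh x := Real.cosh_pos x
  have htfun : Real.tanh = fun y : ℝ => Real.sinh y / Real.cosh y := by
    funext y; exact Real.tanh_eq_sinh_div_cosh y
  have htanh : HasDerivAt Real.tanh (1 / Real.cosh x ^ 2) x := by
    rw [htfun]
    have h := (Real.hasDerivAt_sinh x).div (Real.hasDerivAt_cosh x) (ne_of_gt hc)
    refine h.congr_deriv ?_
    have := Real.cosh_sq_sub_sinh_sq x
    field_simp
    nlinarith [this]
  have hdiv : HasDerivAt (fun y : ℝ => Real.tanh y / y)
      ((1 / Real.cosh x ^ 2 * x - Real.tanh x * 1) / x ^ 2) x :=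
    htanh.div (hasDerivAt_id x) (ne_of_gt hx)
  rw [hdiv.deriv]
  set s := Real.sinh x
  set c := Real.cosh x
  have hpyth : c ^ 2 - s ^ 2 = 1 := Real.cosh_sq_sub_sinh_sq x
  have hexp : c - s = Real.exp (-x) := Real.cosh_sub_sinh x
  have hexp_ge : 1 - 2 * x ≤ Real.exp (-2 * x) := by
    nlinarith [Real.add_one_le_exp (-2 * x)]
  have hsq : Real.exp (-2 * x) = (c - s) ^ 2 := by
    rw [hexp, sq, ← Real.exp_add]; ring_nf
  -- key inequality: s * c ≤ x + s ^ 2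
  have hkey : s * c ≤ x + s ^ 2 := by nlinarith [hexp_ge, hsq, hpyth]
  have htanh_eq : Real.tanh x = s / c := Real.tanh_eq_sinh_div_cosh x
  rw [htanh_eq]
  have h1 : -((1 / c ^ 2 * x - s / c * 1) / x ^ 2) = (s * c - x) / (c ^ 2 * x ^ 2) := by
    field_simp; ring
  have h2 : (s / c / x) ^ 2 = s ^ 2 / (c ^ 2 * x ^ 2) := by
    field_simp
  rw [h1, h2, div_le_div_iff₀ (by positivity) (by positivity)]
  nlinarith [hkey, mul_pos (mul_pos hc hc) (mul_pos hx hx), sq_nonneg s]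
end

section
/- The function x ↦ -h'(x)/h(x)^{3/2} is bounded on (0,∞), where h(x) = tanh(x)/x. That is, there exists C > 0 such that -h'(x) ≤ C · h(x)^{3/2} for all x > 0. -/
open Real

/-- sinh x ≤ x * cosh x for x ≥ 0, i.e. tanh x ≤ x. -/
lemma sinh_le_mul_cosh {x : ℝ} (hx : 0 ≤ x) : Real.sinh x ≤ x * Real.cosh x := by
  have key : MonotoneOn (fun y : ℝ => y * Real.cosh y - Real.sinh y) (Set.Ici 0) := by
    have hd : ∀ y : ℝ, HasDerivAt (fun y : ℝ => y * Real.cosh y - Real.sinh y)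
        (y * Real.sinh y) y := by
      intro y
      have h1 := (hasDerivAt_id y).mul (Real.hasDerivAt_cosh y)
      have h2 := h1.sub (Real.hasDerivAt_sinh y)
      exact h2.congr_deriv (by simp only [id_eq, one_mul]; ring)
    apply monotoneOn_of_deriv_nonneg (convex_Ici 0)
    · exact (Continuous.continuousOn (by continuity))
    · intro y hy
      exact (hd y).differentiableAt.differentiableWithinAt
    · intro y hy
      rw [interior_Ici] at hy
      rw [(hd y).deriv]
      exact mul_nonneg (le_of_lt hy) (Real.sinh_pos_iff.2 hy).le
  have h0 := key (Set.self_mem_Ici) (Set.mem_Ici.2 hx) hx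
  simp only [Real.sinh_zero, Real.cosh_zero, mul_one, zero_mul, sub_zero] at h0
  linarith

lemma tanh_le_self {x : ℝ} (hx : 0 ≤ x) : Real.tanh x ≤ x := by
  rw [Real.tanh_eq_sinh_div_cosh, div_le_iff₀ (Real.cosh_pos _)]
  exact sinh_le_mul_cosh hx

lemma tanh_hasDerivAt (x : ℝ) : HasDerivAt Real.tanh (1 / Real.cosh x ^ 2) x := by
  have h := (Real.hasDerivAt_sinh x).div (Real.hasDerivAt_cosh x) (Real.cosh_pos (x := x)).ne'
  have heq : (Real.sinh / Real.cosh) = Real.tanh := by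
    funext y; rw [Pi.div_apply, Real.tanh_eq_sinh_div_cosh]
  rw [heq] at h
  have := Real.cosh_sq_sub_sinh_sq x
  exact h.congr_deriv (by rw [← this]; ring)

/-- The function x ↦ -h'(x)/h(x)^{3/2} is bounded on (0,∞) for h(x) = tanh(x)/x:
there is C > 0 with -h'(x) ≤ C · h(x)^{3/2} for all x > 0. -/
theorem neg_deriv_tanh_div_le_rpow :
    ∃ C : ℝ, 0 < C ∧ ∀ x : ℝ, 0 < x →
      -(deriv (fun y : ℝ => Real.tanh y / y) x)
        ≤ C * (Real.tanh x / x) ^ (3 / 2 : ℝ) := by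
  refine ⟨5, by norm_num, fun x hx => ?_⟩
  have hcosh := Real.cosh_pos (x := x)
  have hsinh : 0 < Real.sinh x := Real.sinh_pos_iff.2 hx
  have htanh : 0 < Real.tanh x := by
    rw [Real.tanh_eq_sinh_div_cosh]; positivity
  have hh : 0 < Real.tanh x / x := div_pos htanh hx
  -- compute the derivative
  have hd : HasDerivAt (fun y : ℝ => Real.tanh y / y)
      ((1 / Real.cosh x ^ 2 * x - Real.tanh x * 1) / x ^ 2) x :=
    (tanh_hasDerivAt x).div (hasDerivAt_id x) hx.ne'
  rw [hd.deriv]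
  have hx2 : (0:ℝ) < x ^ 2 := by positivity
  -- -h'(x) = (tanh x - x / cosh x ^ 2) / x ^ 2
  have hneg : -((1 / Real.cosh x ^ 2 * x - Real.tanh x * 1) / x ^ 2)
      = (Real.tanh x - x / Real.cosh x ^ 2) / x ^ 2 := by
    field_simp; ring
  rw [hneg]
  rcases le_or_gt x 1 with hle | hgt
  · -- small x : numerator ≤ x^3, and h ≥ 1/2
    have hnum : Real.tanh x - x / Real.cosh x ^ 2 ≤ x ^ 3 := by
      have ht := tanh_le_self hx.le
      have h1 : Real.tanh x - x / Real.cosh x ^ 2 ≤ x - x / Real.cosh x ^ 2 := by linarith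
      have h2 : x - x / Real.cosh x ^ 2 = x * (Real.tanh x) ^ 2 := by
        rw [Real.tanh_eq_sinh_div_cosh]
        have := Real.cosh_sq_sub_sinh_sq x
        field_simp
        nlinarith [this]
      have h3 : x * (Real.tanh x) ^ 2 ≤ x * x ^ 2 := by
        apply mul_le_mul_of_nonneg_left _ hx.le
        exact pow_le_pow_left₀ htanh.le ht 2
      nlinarith
    have hlhs : (Real.tanh x - x / Real.cosh x ^ 2) / x ^ 2 ≤ x := by
      rw [div_le_iff₀ hx2]
      calc Real.tanh x - x / Real.cosh x ^ 2 ≤ x ^ 3 := hnum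
        _ = x * x ^ 2 := by ring
    -- h ≥ 1/2 on (0,1]
    have hhalf : (1:ℝ)/2 ≤ Real.tanh x / x := by
      have hs : x ≤ Real.sinh x := (Real.self_lt_sinh_iff.2 hx).le
      have hc : Real.cosh x ≤ Real.cosh 1 := by
        rw [Real.cosh_le_cosh]
        rw [abs_of_pos hx, abs_one]; exact hle
      have hc1 : Real.cosh 1 < 2 := by
        rw [Real.cosh_eq]
        have h1 : Real.exp 1 < 2.7182818286 := Real.exp_one_lt_d9
        have h2 : Real.exp (-1) < 1 := Real.exp_lt_one_iff.2 (by norm_num)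
        linarith
      have : Real.tanh x = Real.sinh x / Real.cosh x := Real.tanh_eq_sinh_div_cosh x
      rw [this, div_div, le_div_iff₀ (by positivity)]
      have hcx : Real.cosh x * x ≤ 2 * x := by nlinarith
      linarith
    have hrpow : ((1:ℝ)/2) ^ ((3:ℝ)/2) ≤ (Real.tanh x / x) ^ ((3:ℝ)/2) :=
      Real.rpow_le_rpow (by norm_num) hhalf (by norm_num)
    have hq : (1:ℝ)/4 ≤ ((1:ℝ)/2) ^ ((3:ℝ)/2) := by
      have := Real.rpow_le_rpow_of_exponent_ge (x := (1:ℝ)/2) (by norm_num) (by norm_num)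
        (show (3:ℝ)/2 ≤ 2 by norm_num)
      have h4 : ((1:ℝ)/2) ^ (2:ℝ) = 1/4 := by
        rw [show (2:ℝ) = ((2:ℕ):ℝ) by norm_num, Real.rpow_natCast]; norm_num
      linarith [h4 ▸ this]
    calc (Real.tanh x - x / Real.cosh x ^ 2) / x ^ 2 ≤ x := hlhs
      _ ≤ 1 := hle
      _ ≤ 5 * (1/4) := by norm_num
      _ ≤ 5 * (Real.tanh x / x) ^ ((3:ℝ)/2) := by
          apply mul_le_mul_of_nonneg_left _ (by norm_num)
          linarith
  · -- large x : numerator ≤ tanh x, and tanh x ≥ 1/2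
    have hlhs : (Real.tanh x - x / Real.cosh x ^ 2) / x ^ 2 ≤ Real.tanh x / x ^ 2 := by
      exact (div_le_div_iff_of_pos_right hx2).2 (sub_le_self _ (by positivity))
    -- tanh x ≥ 1/2 for x ≥ 1
    have h2s : Real.cosh x ≤ 2 * Real.sinh x := by
      rw [Real.cosh_eq, Real.sinh_eq]
      have hex : Real.exp 2 ≤ Real.exp (2 * x) := Real.exp_le_exp.2 (by linarith)
      have h3 : (3:ℝ) ≤ Real.exp 2 := by
        have h1 : (2.7182818283:ℝ) < Real.exp 1 := Real.exp_one_gt_d9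
        have : Real.exp 2 = Real.exp 1 * Real.exp 1 := by
          rw [← Real.exp_add]; norm_num
        nlinarith
      have hprod : Real.exp x = Real.exp (-x) * Real.exp (2 * x) := by
        rw [← Real.exp_add]; ring_nf
      have hpos := Real.exp_pos (-x)
      nlinarith
    have ht2 : (1:ℝ)/2 ≤ Real.tanh x := by
      rw [Real.tanh_eq_sinh_div_cosh, le_div_iff₀ hcosh]
      linarith
    set t := Real.tanh x with htdef
    -- rewrite rpow
    have hsplit : (t / x) ^ ((3:ℝ)/2) = t / x * Real.sqrt (t * x) / x := by
      rw [show (3:ℝ)/2 = 1 + 1/2 by norm_num, Real.rpow_add hh, Real.rpow_one,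
        ← Real.sqrt_eq_rpow]
      have h2 : Real.sqrt (t / x) = Real.sqrt (t * x) / x := by
        rw [show t / x = t * x / x ^ 2 by field_simp,
          Real.sqrt_div (by positivity), Real.sqrt_sq hx.le]
      rw [h2]; ring
    have hkey : 1 ≤ 5 * Real.sqrt (t * x) := by
      have htx : (1:ℝ)/4 ≤ t * x := by nlinarith
      have : (1:ℝ)/2 ≤ Real.sqrt (t * x) := by
        rw [show (1:ℝ)/2 = Real.sqrt (1/4) by
          rw [show (1:ℝ)/4 = (1/2)^2 by norm_num, Real.sqrt_sq]; norm_num]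
        exact Real.sqrt_le_sqrt htx
      linarith
    have hfinal : t / x ^ 2 ≤ 5 * ((t / x) ^ ((3:ℝ)/2)) := by
      rw [hsplit]
      have h1 : t / x ^ 2 * 1 ≤ t / x ^ 2 * (5 * Real.sqrt (t * x)) :=
        mul_le_mul_of_nonneg_left hkey (by positivity)
      calc t / x ^ 2 = t / x ^ 2 * 1 := by ring
        _ ≤ t / x ^ 2 * (5 * Real.sqrt (t * x)) := h1
        _ = 5 * (t / x * Real.sqrt (t * x) / x) := by field_simp
    exact hlhs.trans hfinal
end

section
/- Let ζ₀ belong to the Sobolev-type space H^{1/2}, i.e., ∑_{k≥0}(1+k)|⟨ζ₀,φ_k⟩|² < ∞, where (φ_k) is the cosine orthonormal basis of L²[0,π]. Then ∑_{k≥1} k² · |√(tanh(√μ k)/(√μ k)) - 1|² · |⟨ζ₀,φ_k⟩|² ≤ μ · ∑_{k≥1} k⁴ |⟨ζ₀,φ_k⟩|² whenever the right side is finite; consequently for ζ₀ in H¹ (meaning ∑ k⁴|⟨ζ₀,φ_k⟩|² < ∞), ‖((1/μ)A_μ)^{1/2}ζ₀ - A₀^{1/2}ζ₀‖²_{L²}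 ≤ μ‖ζ₀‖²_{H¹}. -/
open Real

lemma mono_aux (f f' : ℝ → ℝ) (hderiv : ∀ x, HasDerivAt f (f' x) x)
    (hpos : ∀ x ∈ Set.Ici (0:ℝ), 0 ≤ f' x) : MonotoneOn f (Set.Ici 0) := by
  apply monotoneOn_of_deriv_nonneg (convex_Ici 0)
    (fun x _ => (hderiv x).continuousAt.continuousWithinAt)
    (fun x _ => ((hderiv x).differentiableAt).differentiableWithinAt)
  intro x hx
  rw [(hderiv x).deriv]
  exact hpos x (le_of_lt (by simpa using hx))

lemma key_ineq {x : ℝ} (hx : 0 ≤ x) :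
    x * Real.cosh x - Real.sinh x ≤ x ^ 2 * Real.cosh x := by
  have h := mono_aux (fun y => y ^ 2 * Real.cosh y + Real.sinh y - y * Real.cosh y)
    (fun y => 2 * y * Real.cosh y + (y ^ 2 - y) * Real.sinh y)
    (fun y => by
      have h1 : HasDerivAt (fun y : ℝ => y ^ 2 * Real.cosh y)
          (2 * y ^ 1 * Real.cosh y + y ^ 2 * Real.sinh y) y := by
        have := (hasDerivAt_pow 2 y).mul (Real.hasDerivAt_cosh y)
        exact this.congr_deriv (by norm_num)
      have h2 := (h1.add (Real.hasDerivAt_sinh y)).sub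
        ((hasDerivAt_id y).mul (Real.hasDerivAt_cosh y))
      exact h2.congr_deriv (by simp only [id]; ring))
    (fun y hy => by
      simp only [Set.mem_Ici] at hy
      have hs : 0 ≤ Real.sinh y := (by rw [← Real.sinh_zero]; exact Real.sinh_le_sinh.2 hy)
      have hc : Real.sinh y ≤ Real.cosh y := le_of_lt (Real.sinh_lt_cosh y)
      show 0 ≤ 2 * y * Real.cosh y + (y ^ 2 - y) * Real.sinh y
      rcases le_or_gt 1 y with h1 | h1
      · have : 0 ≤ y ^ 2 - y := by nlinarith
        positivity
      · have : (y ^ 2 - y) * Real.sinh y ≥ -1 * (y * Real.sinh y) := by nlinarith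
        nlinarith [Real.cosh_pos y, mul_nonneg hy hs, mul_nonneg hy (sub_nonneg.2 hc), mul_nonneg hy (hs.trans hc)])
  have := h (Set.self_mem_Ici) hx hx
  simp at this
  linarith

lemma abs_sqrt_tanh_sub_one_le {x : ℝ} (hx : 0 < x) :
    |Real.sqrt (Real.tanh x / x) - 1| ≤ x := by
  set t := Real.tanh x / x with ht
  have hcosh := Real.cosh_pos x
  have htanh : Real.tanh x ≤ x := by
    rw [Real.tanh_eq_sinh_div_cosh, div_le_iff₀ hcosh]
    exact sinh_le_mul_cosh hx.le
  have ht1 : t ≤ 1 := by rw [ht, div_le_one hx]; exact htanh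
  have ht0 : 0 ≤ t := by
    apply div_nonneg _ hx.le
    rw [Real.tanh_eq_sinh_div_cosh]
    exact div_nonneg ((by rw [← Real.sinh_zero]; exact Real.sinh_le_sinh.2 hx.le)) hcosh.le
  have hsq1 : Real.sqrt t ≤ 1 := by
    rw [show (1:ℝ) = Real.sqrt 1 by simp]
    exact Real.sqrt_le_sqrt ht1
  have hts : t ≤ Real.sqrt t := by
    nlinarith [Real.sq_sqrt ht0, Real.sqrt_nonneg t]
  have h1t : 1 - t ≤ x := by
    have hpos : (0:ℝ) < Real.cosh x * x := by positivity
    have hle : 1 - x ≤ t := by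
      rw [ht, Real.tanh_eq_sinh_div_cosh, div_div, le_div_iff₀ hpos]
      nlinarith [key_ineq hx.le]
    linarith
  rw [abs_sub_le_iff]
  constructor
  · linarith
  · linarith [Real.sqrt_nonneg t, hx]

/-- In Fourier coefficients c k = ⟨ζ₀, φ_k⟩: for μ ∈ (0,1), if
∑_{k≥1} k⁴|c_k|² < ∞ (ζ₀ ∈ H¹), then
∑_{k≥1} k²·|√(tanh(√μ k)/(√μ k)) - 1|²·|c_k|² ≤ μ·∑_{k≥1} k⁴|c_k|²,
i.e. ‖((1/μ)A_μ)^{1/2}ζ₀ - A₀^{1/2}ζ₀‖²_{L²} ≤ μ‖ζ₀‖²_{H¹}. -/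
theorem sqrt_op_convergence (μ : ℝ) (hμ0 : 0 < μ) (hμ1 : μ < 1)
    (c : ℕ → ℝ)
    (hH1 : Summable fun k : ℕ => ((k : ℝ) + 1) ^ 4 * (c (k + 1)) ^ 2) :
    (∑' k : ℕ, ((k : ℝ) + 1) ^ 2
        * |Real.sqrt (Real.tanh (Real.sqrt μ * ((k : ℝ) + 1))
              / (Real.sqrt μ * ((k : ℝ) + 1))) - 1| ^ 2
        * (c (k + 1)) ^ 2)
      ≤ μ * ∑' k : ℕ, ((k : ℝ) + 1) ^ 4 * (c (k + 1)) ^ 2 := by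
  set f : ℕ → ℝ := fun k => ((k : ℝ) + 1) ^ 2
        * |Real.sqrt (Real.tanh (Real.sqrt μ * ((k : ℝ) + 1))
              / (Real.sqrt μ * ((k : ℝ) + 1))) - 1| ^ 2
        * (c (k + 1)) ^ 2 with hf
  have hpt : ∀ k : ℕ, f k ≤ μ * (((k : ℝ) + 1) ^ 4 * (c (k + 1)) ^ 2) := by
    intro k
    set x : ℝ := Real.sqrt μ * ((k : ℝ) + 1) with hxdef
    have hxpos : 0 < x := by positivity
    have hb := abs_sqrt_tanh_sub_one_le hxpos
    have hb2 : |Real.sqrt (Real.tanh x / x) - 1| ^ 2 ≤ x ^ 2 :=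
      pow_le_pow_left₀ (abs_nonneg _) hb 2
    have hx2 : x ^ 2 = μ * ((k : ℝ) + 1) ^ 2 := by
      rw [hxdef, mul_pow, Real.sq_sqrt hμ0.le]
    have := mul_le_mul_of_nonneg_right
      (mul_le_mul_of_nonneg_left hb2 (by positivity : (0:ℝ) ≤ ((k : ℝ) + 1) ^ 2))
      (sq_nonneg (c (k + 1)))
    calc f k ≤ ((k : ℝ) + 1) ^ 2 * x ^ 2 * (c (k + 1)) ^ 2 := this
      _ = μ * (((k : ℝ) + 1) ^ 4 * (c (k + 1)) ^ 2) := by rw [hx2]; ring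
  have hsum2 : Summable fun k : ℕ => μ * (((k : ℝ) + 1) ^ 4 * (c (k + 1)) ^ 2) :=
    hH1.mul_left μ
  have hsum1 : Summable f :=
    Summable.of_nonneg_of_le (fun k => by positivity) hpt hsum2
  calc ∑' k, f k ≤ ∑' k : ℕ, μ * (((k : ℝ) + 1) ^ 4 * (c (k + 1)) ^ 2) :=
        Summable.tsum_le_tsum hpt hsum1 hsum2
    _ = μ * ∑' k : ℕ, ((k : ℝ) + 1) ^ 4 * (c (k + 1)) ^ 2 := tsum_mul_left
end
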